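/- If R is a semilocal ring (R/Jac(R) semisimple), then every finitely generated left R-module is weakly supplemented. -/

import Mathlib

/-- A submodule `N` of `M` is small (superfluous) in `M`. -/
def IsSmallSubmodule {R M : Type*} [Ring R] [AddCommGroup M] [Module R M]
    (N : Submodule R M) : Prop :=
  ∀ K : Submodule R M, N ⊔ K = ⊤ → K = ⊤

/-- `L` is a weak supplement of `N` in `M`. -/
def IsWeakSupplement {R M : Type*} [Ring R] [AddCommGroup M] [Module R M]
    (L N : Submodule R M) : Prop :=
  N ⊔ L = ⊤ ∧ IsSmallSubmodule (N ⊓ L)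

/-- A module is weakly supplemented if every submodule has a weak supplement. -/
def IsWeaklySupplemented (R M : Type*) [Ring R] [AddCommGroup M] [Module R M] : Prop :=
  ∀ N : Submodule R M, ∃ L : Submodule R M, IsWeakSupplement L N

/-- A left ideal is left t-nilpotent if every sequence in it has a vanishing
initial left product `a 0 * a 1 * ⋯ * a (n-1) = 0`. -/
def IsLeftTNilpotent {R : Type*} [Ring R] (I : Ideal R) : Prop :=
  ∀ a : ℕ → R, (∀ i, a i ∈ I) → ∃ n : ℕ, ((List.range n).map a).prod = 0

/-- A ring is semilocal if it is semisimple modulo its Jacobson radical. -/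
def IsSemilocalRing (R : Type*) [Ring R] : Prop :=
  IsSemisimpleModule R (R ⧸ (⊥ : Ideal R).jacobson)

/-- A ring is left perfect iff it is semilocal with left t-nilpotent Jacobson radical. -/
def IsLeftPerfectRing (R : Type*) [Ring R] : Prop :=
  IsSemilocalRing R ∧ IsLeftTNilpotent (⊥ : Ideal R).jacobson

section Aux
open Submodule

variable {R : Type*} [Ring R] {M : Type*} [AddCommGroup M] [Module R M]

lemma jac_smul_span_singleton {m x : M}
    (hx : x ∈ (⊥ : Ideal R).jacobson • (span R {m} : Submodule R M)) :
    ∃ a ∈ (⊥ : Ideal R).jacobson, a • m = x := by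
  refine Submodule.smul_induction_on hx ?_ ?_
  · intro r hr n hn
    obtain ⟨c, rfl⟩ := mem_span_singleton.mp hn
    refine ⟨r * c, Ideal.mul_mem_right c _ hr, mul_smul r c m⟩
  · rintro x y ⟨a, ha, rfl⟩ ⟨b, hb, rfl⟩
    exact ⟨a + b, add_mem ha hb, add_smul a b m⟩

lemma nakayama_aux
    (hJ : (⊥ : Ideal R).jacobson • (⊤ : Submodule R M) = ⊤) (S : Finset M) :
    span R (S : Set M) = ⊤ → (⊤ : Submodule R M) = ⊥ := by
  classical
  induction S using Finset.induction_on with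
  | empty => intro h; simpa using h.symm
  | insert _ _ hx ih =>
    rename_i x t
    intro hS
    rw [Finset.coe_insert, span_insert] at hS
    have hmem : x ∈ (⊥ : Ideal R).jacobson • (span R {x}) ⊔ span R (t : Set M) := by
      have hx1 : x ∈ (⊥ : Ideal R).jacobson • (⊤ : Submodule R M) := hJ.symm ▸ mem_top
      rw [← hS, Submodule.smul_sup] at hx1
      exact (sup_le_sup_left Submodule.smul_le_right _ :
        _ ≤ (⊥ : Ideal R).jacobson • (span R {x}) ⊔ span R (t : Set M)) hx1
    obtain ⟨y, hy, z, hz, hyz⟩ := mem_sup.mp hmem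
    obtain ⟨a, ha, rfl⟩ := jac_smul_span_singleton hy
    have h1 : (1 - a) • x ∈ span R (t : Set M) := by
      have h2 : (1 - a) • x = z := by rw [sub_smul, one_smul, eq_sub_of_add_eq' hyz]
      rwa [h2]
    obtain ⟨s, hs⟩ := Ideal.exists_mul_sub_mem_of_sub_one_mem_jacobson (1 - a)
      (by simpa using (⊥ : Ideal R).jacobson.neg_mem ha)
    rw [Ideal.mem_bot, sub_eq_zero] at hs
    have hxmem : x ∈ span R (t : Set M) := by
      have h3 := smul_mem _ s h1
      rwa [← mul_smul, hs, one_smul] at h3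
    apply ih
    rw [← hS]
    rw [sup_eq_right.mpr ((span_singleton_le_iff_mem x _).mpr hxmem)]

lemma small_jac_smul_top [Module.Finite R M] :
    IsSmallSubmodule ((⊥ : Ideal R).jacobson • (⊤ : Submodule R M)) := by
  intro K hK
  have hq : (⊥ : Ideal R).jacobson • (⊤ : Submodule R (M ⧸ K)) = ⊤ := by
    have := congrArg (Submodule.map K.mkQ) hK
    rwa [Submodule.map_sup, Submodule.map_smul'', Submodule.map_top, Submodule.range_mkQ,
      Submodule.mkQ_map_self, sup_bot_eq] at this
  obtain ⟨S, hS⟩ : (⊤ : Submodule R (M ⧸ K)).FG := Module.finite_def.mp inferInstance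
  have h0 := nakayama_aux hq S hS
  have : Subsingleton (M ⧸ K) := by
    constructor; intro a b
    have ha : a ∈ (⊥ : Submodule R (M ⧸ K)) := h0 ▸ mem_top
    have hb : b ∈ (⊥ : Submodule R (M ⧸ K)) := h0 ▸ mem_top
    rw [mem_bot] at ha hb; rw [ha, hb]
  exact Submodule.Quotient.subsingleton_iff.mp this

lemma semisimple_quotient (hsl : IsSemisimpleModule R (R ⧸ (⊥ : Ideal R).jacobson))
    [Module.Finite R M] :
    IsSemisimpleModule R (M ⧸ ((⊥ : Ideal R).jacobson • (⊤ : Submodule R M))) := by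
  set J := (⊥ : Ideal R).jacobson with hJ
  set P : Submodule R M := J • ⊤ with hPdef
  obtain ⟨n, s, hs⟩ := Module.Finite.exists_fin (R := R) (M := M)
  have : IsSemisimpleModule R (R ⧸ J) := hsl
  set g : Fin n → (R ⧸ J) →ₗ[R] (M ⧸ P) := fun i =>
    Submodule.liftQ J (LinearMap.toSpanSingleton R (M ⧸ P) (P.mkQ (s i))) (by
      intro j hj
      rw [LinearMap.mem_ker, LinearMap.toSpanSingleton_apply, ← map_smul]
      exact (Submodule.Quotient.mk_eq_zero P).mpr
        (Submodule.smul_mem_smul hj Submodule.mem_top)) with hgdef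
  refine isSemisimpleModule_of_isSemisimpleModule_submodule'
    (p := fun i => LinearMap.range (g i)) (fun i => IsSemisimpleModule.range _) ?_
  have hr : ∀ i, LinearMap.range (g i) = span R {P.mkQ (s i)} := fun i => by
    rw [hgdef, Submodule.range_liftQ]
    exact (LinearMap.span_singleton_eq_range R _ _).symm
  simp_rw [hr]
  have h1 : Set.range (fun i => P.mkQ (s i)) = P.mkQ '' Set.range s := by
    exact (Set.range_comp P.mkQ s)
  calc ⨆ i, span R {P.mkQ (s i)} = span R (Set.range fun i => P.mkQ (s i)) := by
        rw [span_eq_iSup_of_singleton_spans]; rw [iSup_range]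
    _ = Submodule.map P.mkQ (span R (Set.range s)) := by rw [h1, Submodule.span_image]
    _ = ⊤ := by rw [hs, Submodule.map_top, Submodule.range_mkQ]

end Aux

/-- Over a semilocal ring every finitely generated module is weakly supplemented. -/
theorem stmt11 {R : Type u} [Ring R] (hsl : IsSemilocalRing R)
    (M : Type v) [AddCommGroup M] [Module R M] [Module.Finite R M] :
    IsWeaklySupplemented R M := by
  have hsl' : IsSemisimpleModule R (R ⧸ (⊥ : Ideal R).jacobson) := hsl
  intro N
  set J := (⊥ : Ideal R).jacobson with hJ
  set P : Submodule R M := J • ⊤ with hPdef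
  have hP : IsSmallSubmodule P := small_jac_smul_top
  have hss : IsSemisimpleModule R (M ⧸ P) := semisimple_quotient hsl'
  obtain ⟨C, hC⟩ := exists_isCompl (Submodule.map P.mkQ N)
  set L := Submodule.comap P.mkQ C with hLdef
  have hPL : P ≤ L := by
    intro x hx
    show P.mkQ x ∈ C
    have : P.mkQ x = 0 := (Submodule.Quotient.mk_eq_zero P).mpr hx
    rw [this]; exact C.zero_mem
  have hsup : N ⊔ L = ⊤ := by
    have h1 : Submodule.map P.mkQ (N ⊔ L) = ⊤ := by
      rw [Submodule.map_sup, hLdef, Submodule.map_comap_eq, Submodule.range_mkQ, top_inf_eq,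
        hC.sup_eq_top]
    have h2 := congrArg (Submodule.comap P.mkQ) h1
    rw [Submodule.comap_map_mkQ, Submodule.comap_top] at h2
    rwa [sup_eq_right.mpr (le_trans hPL le_sup_right)] at h2
  have hinf : N ⊓ L ≤ P := by
    rintro x ⟨hxN, hxL⟩
    have hm : P.mkQ x ∈ Submodule.map P.mkQ N ⊓ C := ⟨Submodule.mem_map_of_mem hxN, hxL⟩
    rw [hC.inf_eq_bot, Submodule.mem_bot] at hm
    exact (Submodule.Quotient.mk_eq_zero P).mp hm
  refine ⟨L, hsup, fun K hK => hP K ?_⟩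
  exact top_unique (hK ▸ sup_le_sup_right hinf K)
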